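/- For relatively prime positive integers m and n with n ≥ 2m, there exist homomorphisms in both directions between the circular complete graph K_{n/m} and B(n,m), the symmetrization of ι_m(T⃗_n); that is, K_{n/m} and B(n,m) are homomorphically equivalent. -/
import Mathlib


/-- Adjacency in the circular complete graph `K_{n/m}`: vertex set `Z_n`, with `u ~ v`
iff `u - v ∈ {m, m+1, …, n-m}`. -/
def circRel (n m : ℕ) (u v : ZMod n) : Prop :=
  ∃ k : ℕ, m ≤ k ∧ k ≤ n - m ∧ u - v = (k : ZMod n)

/-- The transitive tournament `T⃗_n`: an arc `i → j` iff `i < j`. -/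
def tournRel (n : ℕ) (i j : Fin n) : Prop := i < j

/-- The `m`-th interleaved adjoint `ι_m(H)`: vertices are the `m`-tuples of vertices of
`H`, with an arc `(u₁,…,u_m) → (v₁,…,v_m)` iff `u_i → v_i` for all `i` and
`v_i → u_{i+1}` for all `i = 1, …, m-1`. -/
def iotaRel {α : Type} (m : ℕ) (H : α → α → Prop) (U V : Fin m → α) : Prop :=
  (∀ i, H (U i) (V i)) ∧ ∀ i j : Fin m, i.val + 1 = j.val → H (V i) (U j)

/-- The symmetrization of a digraph, as an adjacency relation: `u ~ v` iff there is an
arc between them in some direction. -/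
def symmRel {α : Type} (D : α → α → Prop) (u v : α) : Prop := D u v ∨ D v u

/-- The map `Z_n → tuples`: `u ↦ (⌊(u.val + i·n)/m⌋)_{i<m}`. -/
def phiF (n m : ℕ) (hm : 0 < m) (hn : 0 < n) (u : ZMod n) (i : Fin m) : Fin n :=
  ⟨(ZMod.val u + i.val * n) / m, by
    haveI : NeZero n := ⟨hn.ne'⟩
    rw [Nat.div_lt_iff_lt_mul hm]
    have h1 : (i.val + 1) * n ≤ m * n := Nat.mul_le_mul_right n i.isLt
    have h2 : ZMod.val u < n := ZMod.val_lt u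
    nlinarith⟩

lemma phi_arc (n m : ℕ) (hm : 0 < m) (h2 : 2 * m ≤ n) (hn : 0 < n)
    (b k : ℕ) (hbk : b + k < n) (hk1 : m ≤ k) (hk2 : k ≤ n - m)
    (u v : ZMod n) (hu : ZMod.val u = b + k) (hv : ZMod.val v = b) :
    iotaRel m (tournRel n) (phiF n m hm hn v) (phiF n m hm hn u) := by
  constructor
  · intro i
    show (⟨_, _⟩ : Fin n) < ⟨_, _⟩
    rw [Fin.lt_def]
    show (ZMod.val v + i.val * n) / m < (ZMod.val u + i.val * n) / m
    rw [hu, hv]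
    have h3 : (b + i.val * n + m) / m ≤ (b + k + i.val * n) / m :=
      Nat.div_le_div_right (by omega)
    rw [Nat.add_div_right _ hm] at h3
    omega
  · intro i j hij
    show (⟨_, _⟩ : Fin n) < ⟨_, _⟩
    rw [Fin.lt_def]
    show (ZMod.val u + i.val * n) / m < (ZMod.val v + j.val * n) / m
    rw [hu, hv]
    have hjn : j.val * n = i.val * n + n := by rw [← hij]; ring
    have h3 : (b + k + i.val * n + m) / m ≤ (b + j.val * n) / m :=
      Nat.div_le_div_right (by omega)
    rw [Nat.add_div_right _ hm] at h3
    omega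

/-- The map `tuples → Z_n`: `U ↦ ∑ U_i`. -/
def psiF (n m : ℕ) (U : Fin m → Fin n) : ZMod n :=
  ((∑ i, (U i).val : ℕ) : ZMod n)

lemma sum_lower (n m : ℕ) (U V : Fin m → Fin n)
    (h : iotaRel m (tournRel n) U V) :
    (∑ i, (U i).val) + m ≤ ∑ i, (V i).val := by
  have h1 : ∑ i : Fin m, ((U i).val + 1) ≤ ∑ i, (V i).val :=
    Finset.sum_le_sum (fun i _ => Fin.lt_def.mp (h.1 i))
  simpa [Finset.sum_add_distrib] using h1

lemma sum_upper (n p : ℕ) (U V : Fin (p + 1) → Fin n)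
    (h : iotaRel (p + 1) (tournRel n) U V) :
    (∑ i, (V i).val) + (p + 1) ≤ (∑ i, (U i).val) + n := by
  have hcs : ∀ i : Fin p, (V i.castSucc).val + 1 ≤ (U i.succ).val := by
    intro i
    exact Fin.lt_def.mp (h.2 i.castSucc i.succ rfl)
  have h1 : (∑ i : Fin p, (V i.castSucc).val) + p ≤ ∑ i : Fin p, (U i.succ).val := by
    calc (∑ i : Fin p, (V i.castSucc).val) + p
        = ∑ i : Fin p, ((V i.castSucc).val + 1) := by simp [Finset.sum_add_distrib]
      _ ≤ _ := Finset.sum_le_sum (fun i _ => hcs i)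
  have h2 : ∑ i, (V i).val = (∑ i : Fin p, (V i.castSucc).val) + (V (Fin.last p)).val :=
    Fin.sum_univ_castSucc _
  have h3 : ∑ i, (U i).val = (U 0).val + ∑ i : Fin p, (U i.succ).val :=
    Fin.sum_univ_succ _
  have h4 : (V (Fin.last p)).val < n := (V (Fin.last p)).isLt
  omega

lemma circRel_symm (n m : ℕ) (hm : 0 < m) (h2 : 2 * m ≤ n) {u v : ZMod n}
    (h : circRel n m u v) : circRel n m v u := by
  obtain ⟨k, hk1, hk2, hk⟩ := h
  refine ⟨n - k, by omega, by omega, ?_⟩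
  have hc : ((n - k : ℕ) : ZMod n) = (n : ZMod n) - (k : ZMod n) :=
    Nat.cast_sub (by omega)
  rw [hc, ZMod.natCast_self, ← hk]; ring

lemma psi_arc (n m : ℕ) (hm : 0 < m) (h2 : 2 * m ≤ n) (U V : Fin m → Fin n)
    (h : iotaRel m (tournRel n) U V) : circRel n m (psiF n m V) (psiF n m U) := by
  obtain ⟨p, rfl⟩ : ∃ p, m = p + 1 := ⟨m - 1, by omega⟩
  have hlo := sum_lower n (p + 1) U V h
  have hhi := sum_upper n p U V h
  refine ⟨(∑ i, (V i).val) - (∑ i, (U i).val), by omega, by omega, ?_⟩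
  rw [Nat.cast_sub (by omega)]
  rfl

/-- For relatively prime positive integers `m`, `n` with `n ≥ 2m`, there exist graph
homomorphisms in both directions between the circular complete graph `K_{n/m}` and
`B(n,m)`, the symmetrization of `ι_m(T⃗_n)`. -/
theorem circ_hom_equiv_B (n m : ℕ) (hm : 0 < m) (h2 : 2 * m ≤ n)
    (hcop : Nat.Coprime n m) :
    Nonempty (circRel n m →r symmRel (iotaRel m (tournRel n))) ∧
    Nonempty (symmRel (iotaRel m (tournRel n)) →r circRel n m) := by
  have hn : 0 < n := by omega
  haveI : NeZero n := ⟨hn.ne'⟩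
  constructor
  · refine ⟨⟨phiF n m hm hn, ?_⟩⟩
    intro u v h
    obtain ⟨k, hk1, hk2, hk⟩ := h
    have hkn : k < n := by omega
    have h' : u = v + (k : ZMod n) := by rw [← hk]; ring
    have hval : ZMod.val u = (ZMod.val v + k) % n := by
      rw [h', ZMod.val_add, ZMod.val_natCast, Nat.mod_eq_of_lt hkn]
    have hu := ZMod.val_lt u
    have hv := ZMod.val_lt v
    by_cases hc : ZMod.val v + k < n
    · rw [Nat.mod_eq_of_lt hc] at hval
      exact Or.inr (phi_arc n m hm h2 hn (ZMod.val v) k (by omega) hk1 hk2 u v hval rfl)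
    · have hlt : ZMod.val v + k - n < n := by omega
      rw [Nat.mod_eq_sub_mod (by omega), Nat.mod_eq_of_lt hlt] at hval
      have hv' : ZMod.val v = ZMod.val u + (n - k) := by omega
      exact Or.inl (phi_arc n m hm h2 hn (ZMod.val u) (n - k) (by omega) (by omega)
        (by omega) v u hv' rfl)
  · refine ⟨⟨psiF n m, ?_⟩⟩
    intro U V h
    rcases h with h | h
    · exact circRel_symm n m hm h2 (psi_arc n m hm h2 U V h)
    · exact psi_arc n m hm h2 V U h
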